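/- For any submodule A of V, any finite index types I and J, and any families P, Q of orthogonal projections that are coset-invariant for A, the matrix Π^A[P,Q] is an orthogonal projection: it is Hermitian and satisfies Π^A[P,Q] · Π^A[P,Q] = Π^A[P,Q]. -/

import Mathlib

open scoped BigOperators Kronecker Classical ComplexOrder

noncomputable section

/-- The vector space `F₂ⁿ`. -/
abbrev V (n : ℕ) : Type := Fin n → ZMod 2

/-- The standard bilinear pairing `⟨x,y⟩ = ∑ i, xᵢ * yᵢ` on `F₂ⁿ`. -/
def pairing {n : ℕ} (x y : V n) : ZMod 2 := ∑ i, x i * y i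

/-- `(−1)^b ∈ ℂ` for `b : ZMod 2`. -/
def sign (b : ZMod 2) : ℂ := if b = 0 then 1 else -1

lemma pairing_add_right {n : ℕ} (x y z : V n) :
    pairing x (y + z) = pairing x y + pairing x z := by
  simp [pairing, mul_add, Finset.sum_add_distrib]

lemma pairing_smul_right {n : ℕ} (c : ZMod 2) (x y : V n) :
    pairing x (c • y) = c * pairing x y := by
  simp only [pairing, Pi.smul_apply, smul_eq_mul, Finset.mul_sum]
  exact Finset.sum_congr rfl fun i _ => by ring

/-- The orthogonal complement `A^⊥ = {y | ∀ a ∈ A, ⟨a,y⟩ = 0}`. -/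
def perp {n : ℕ} (A : Submodule (ZMod 2) (V n)) : Submodule (ZMod 2) (V n) where
  carrier := {y | ∀ a ∈ A, pairing a y = 0}
  zero_mem' := by
    simp only [Set.mem_setOf_eq]
    intro a _
    simp [pairing]
  add_mem' := by
    intro y z hy hz
    simp only [Set.mem_setOf_eq] at *
    intro a ha
    rw [pairing_add_right, hy a ha, hz a ha, add_zero]
  smul_mem' := by
    intro c y hy
    simp only [Set.mem_setOf_eq] at *
    intro a ha
    rw [pairing_smul_right, hy a ha, mul_zero]

/-- The coset `A + s = {a + s : a ∈ A}`. -/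
def coset {n : ℕ} (A : Submodule (ZMod 2) (V n)) (s : V n) : Set (V n) :=
  {v | ∃ a ∈ A, v = a + s}

noncomputable instance {n : ℕ} (A : Submodule (ZMod 2) (V n)) : Fintype A :=
  Fintype.ofFinite _

/-- The coset state `|A_{s,s'}⟩ = |A|^{−1/2} ∑_{a ∈ A} (−1)^{⟨a,s'⟩} e_{a+s}`. -/
noncomputable def cosetState {n : ℕ} (A : Submodule (ZMod 2) (V n)) (s s' : V n) :
    EuclideanSpace ℂ (V n) :=
  ((Real.sqrt (Nat.card A) : ℂ))⁻¹ •
    ∑ a : A, sign (pairing (a : V n) s') • EuclideanSpace.single ((a : V n) + s) (1 : ℂ)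

/-- A family of orthogonal projections: each member is Hermitian and idempotent. -/
def IsProjFamily {ι m : Type*} [Fintype m] (P : ι → Matrix m m ℂ) : Prop :=
  ∀ p, (P p).IsHermitian ∧ P p * P p = P p

/-- Coset invariance of a family indexed by pairs `(s, s')`:
the value depends only on the pair of cosets `(A + s, A^⊥ + s')`. -/
def CosetInvariant {n : ℕ} {α : Type*} (A : Submodule (ZMod 2) (V n))
    (F : V n × V n → α) : Prop :=
  ∀ s₁ s₁' s₂ s₂' : V n, coset A s₁ = coset A s₂ →
    coset (perp A) s₁' = coset (perp A) s₂' → F (s₁, s₁') = F (s₂, s₂')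

/-- The rank-one matrix `|A_{s,s'}⟩⟨A_{s,s'}|`. -/
noncomputable def outer {n : ℕ} (A : Submodule (ZMod 2) (V n)) (s s' : V n) :
    Matrix (V n) (V n) ℂ :=
  Matrix.of fun x y => cosetState A s s' x * (starRingEnd ℂ) (cosetState A s s' y)

/-- `Π^A[P,Q] = 2^{−n} ∑_{s,s'} |A_{s,s'}⟩⟨A_{s,s'}| ⊗ P(s,s') ⊗ Q(s,s')`. -/
noncomputable def PiMat {n : ℕ} {I J : Type*} [Fintype I] [Fintype J]
    (A : Submodule (ZMod 2) (V n)) (P : V n × V n → Matrix I I ℂ)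
    (Q : V n × V n → Matrix J J ℂ) : Matrix (V n × I × J) (V n × I × J) ℂ :=
  ((2 : ℂ) ^ n)⁻¹ • ∑ s : V n, ∑ s' : V n, (outer A s s') ⊗ₖ (P (s, s') ⊗ₖ Q (s, s'))

/-- The `ℓ² → ℓ²` operator norm of a complex square matrix. -/
noncomputable def opNorm {m : Type*} [Fintype m] [DecidableEq m] (M : Matrix m m ℂ) : ℝ :=
  ‖Matrix.toEuclideanCLM (𝕜 := ℂ) M‖


section Aux
variable {n : ℕ}

lemma zmod2_cases (b : ZMod 2) : b = 0 ∨ b = 1 := by revert b; decide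

lemma V_add_self (x : V n) : x + x = 0 := by
  funext i
  show x i + x i = 0
  have : ∀ a : ZMod 2, a + a = 0 := by decide
  exact this _

lemma sign_add (b c : ZMod 2) : sign (b + c) = sign b * sign c := by
  rcases zmod2_cases b with hb | hb <;> rcases zmod2_cases c with hc | hc <;>
    subst hb <;> subst hc <;> simp [sign] <;> decide

lemma sign_conj (b : ZMod 2) : (starRingEnd ℂ) (sign b) = sign b := by
  rcases zmod2_cases b with hb | hb <;> subst hb <;> simp [sign]

lemma sign2_mul_self (b : ZMod 2) : sign b * sign b = 1 := by
  rcases zmod2_cases b with hb | hb <;> subst hb <;> simp [sign]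

lemma pairing_comm (x y : V n) : pairing x y = pairing y x := by
  exact Finset.sum_congr rfl fun i _ => mul_comm _ _

lemma pairing_add_left (x y z : V n) : pairing (x + y) z = pairing x z + pairing y z := by
  rw [pairing_comm, pairing_add_right, pairing_comm z x, pairing_comm z y]

lemma mem_coset_iff {A : Submodule (ZMod 2) (V n)} {s z : V n} :
    z ∈ coset A s ↔ z + s ∈ A := by
  constructor
  · rintro ⟨a, ha, rfl⟩
    have : a + s + s = a := by rw [add_assoc, V_add_self, add_zero]
    rwa [this]
  · intro h
    exact ⟨z + s, h, by rw [add_assoc, V_add_self, add_zero]⟩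

lemma coset_eq_iff {A : Submodule (ZMod 2) (V n)} {s₁ s₂ : V n} :
    coset A s₁ = coset A s₂ ↔ s₁ + s₂ ∈ A := by
  constructor
  · intro h
    have h1 : s₁ ∈ coset A s₁ := ⟨0, A.zero_mem, by rw [zero_add]⟩
    rw [h, mem_coset_iff] at h1
    exact h1
  · intro h
    ext z
    rw [mem_coset_iff, mem_coset_iff]
    constructor
    · intro h1
      have := A.add_mem h1 h
      rwa [show z + s₁ + (s₁ + s₂) = z + s₂ by
        rw [show z + s₁ + (s₁ + s₂) = z + (s₁ + s₁) + s₂ by abel, V_add_self, add_zero]] at this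
    · intro h2
      have := A.add_mem h2 h
      rwa [show z + s₂ + (s₁ + s₂) = z + s₁ by
        rw [show z + s₂ + (s₁ + s₂) = z + (s₂ + s₂) + s₁ by abel, V_add_self, add_zero]] at this

lemma sum_subtype_ite {A : Submodule (ZMod 2) (V n)} (w : V n) (f : V n → ℂ) :
    (∑ a : A, if (a : V n) = w then f (a : V n) else 0) = if w ∈ A then f w else 0 := by
  by_cases h : w ∈ A
  · rw [if_pos h, Finset.sum_eq_single (⟨w, h⟩ : A)]
    · simp
    · intro b _ hb
      rw [if_neg]
      intro hbw
      exact hb (Subtype.ext hbw)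
    · intro habs
      exact absurd (Finset.mem_univ _) habs
  · rw [if_neg h]
    apply Finset.sum_eq_zero
    intro a _
    rw [if_neg]
    rintro rfl
    exact h a.2

lemma cosetState_apply (A : Submodule (ZMod 2) (V n)) (s s' z : V n) :
    cosetState A s s' z =
      ((Real.sqrt (Nat.card A) : ℂ))⁻¹ *
        (if z + s ∈ A then sign (pairing (z + s) s') else 0) := by
  unfold cosetState
  have h1 : (∑ a : A, sign (pairing (a : V n) s') • EuclideanSpace.single ((a : V n) + s) (1 : ℂ)) z
      = ∑ a : A, sign (pairing (a : V n) s') * (if z = (a : V n) + s then 1 else 0) := by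
    rw [WithLp.ofLp_sum, Finset.sum_apply]
    refine Finset.sum_congr rfl fun a _ => ?_
    simp [EuclideanSpace.single_apply]
  have h2 : ∀ (a : A), (z = (a : V n) + s) ↔ ((a : V n) = z + s) := by
    intro a
    constructor
    · rintro rfl; rw [add_assoc, V_add_self, add_zero]
    · intro h; rw [h, add_assoc, V_add_self, add_zero]
  rw [WithLp.ofLp_smul, Pi.smul_apply, smul_eq_mul]
  rw [h1]
  congr 1
  rw [← sum_subtype_ite (A := A) (z + s) (fun w => sign (pairing w s'))]
  refine Finset.sum_congr rfl fun a _ => ?_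
  by_cases h : (a : V n) = z + s
  · rw [if_pos ((h2 a).mpr h), if_pos h, mul_one]
  · rw [if_neg (fun hz => h ((h2 a).mp hz)), if_neg h, mul_zero]

end Aux

section Aux2
variable {n : ℕ}

lemma natcard_pos (A : Submodule (ZMod 2) (V n)) : 0 < Nat.card A :=
  Nat.card_pos

lemma sign_sum_eq (A : Submodule (ZMod 2) (V n)) (t : V n) :
    (∑ a : A, sign (pairing (a : V n) t)) =
      if t ∈ perp A then (Nat.card A : ℂ) else 0 := by
  by_cases h : t ∈ perp A
  · rw [if_pos h]
    have : ∀ a : A, sign (pairing (a : V n) t) = 1 := by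
      intro a
      rw [h (a : V n) a.2]
      simp [sign]
    rw [Finset.sum_congr rfl (fun a _ => this a), Finset.sum_const, Nat.card_eq_fintype_card]
    simp
  · rw [if_neg h]
    obtain ⟨a₀, ha₀, hpa⟩ : ∃ a₀ ∈ A, pairing a₀ t ≠ 0 := by
      by_contra hc
      push_neg at hc
      exact h (fun a ha => hc a ha)
    have hpa1 : pairing a₀ t = 1 := by
      rcases zmod2_cases (pairing a₀ t) with h' | h'
      · exact absurd h' hpa
      · exact h'
    set S := ∑ a : A, sign (pairing (a : V n) t) with hS
    have key : S = -S := by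
      have := Fintype.sum_equiv (Equiv.addLeft (⟨a₀, ha₀⟩ : A))
        (fun a : A => sign (pairing ((Equiv.addLeft (⟨a₀, ha₀⟩ : A) a : A) : V n) t))
        (fun a : A => sign (pairing (a : V n) t)) (fun a => rfl)
      rw [hS]
      calc S = ∑ a : A, sign (pairing (((⟨a₀, ha₀⟩ : A) + a : A) : V n) t) := this.symm
        _ = ∑ a : A, sign (pairing (a₀ + (a : V n)) t) := rfl
        _ = ∑ a : A, sign (pairing a₀ t) * sign (pairing (a : V n) t) := by
            refine Finset.sum_congr rfl fun a _ => ?_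
            rw [pairing_add_left, sign_add]
        _ = -S := by
            rw [hpa1]
            have h3 : ∀ a : A, sign 1 * sign (pairing (a : V n) t)
                = -sign (pairing (a : V n) t) := by
              intro a
              simp only [sign, if_neg one_ne_zero]
              split_ifs <;> ring
            rw [Finset.sum_congr rfl (fun a _ => h3 a)]
            exact Finset.sum_neg_distrib (s := Finset.univ) (f := fun a : A => sign (pairing (a : V n) t))
    have h2 : (2 : ℂ) * S = 0 := by linear_combination key
    have := mul_eq_zero.mp h2
    rcases this with h' | h'
    · norm_num at h'
    · exact h'

lemma inner_cosetState (A : Submodule (ZMod 2) (V n)) (s s₁' s₂' : V n) :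
    (∑ z : V n, (starRingEnd ℂ) (cosetState A s s₁' z) * cosetState A s s₂' z) =
      if s₁' + s₂' ∈ perp A then 1 else 0 := by
  have hc : ((Real.sqrt (Nat.card A) : ℂ))⁻¹ * ((Real.sqrt (Nat.card A) : ℂ))⁻¹
      * (Nat.card A : ℂ) = 1 := by
    have hpos : (0 : ℝ) < Nat.card A := Nat.cast_pos.mpr (natcard_pos A)
    have h1 : (Real.sqrt (Nat.card A) : ℝ) * Real.sqrt (Nat.card A) = Nat.card A :=
      Real.mul_self_sqrt (le_of_lt hpos)
    have h2 : ((Real.sqrt (Nat.card A) : ℂ)) * ((Real.sqrt (Nat.card A) : ℂ))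
        = (Nat.card A : ℂ) := by
      rw [← Complex.ofReal_mul, h1]
      push_cast
      ring
    rw [← mul_inv, h2]
    exact inv_mul_cancel₀ (by exact_mod_cast (natcard_pos A).ne')
  have key : ∀ z : V n,
      (starRingEnd ℂ) (cosetState A s s₁' z) * cosetState A s s₂' z =
        ((Real.sqrt (Nat.card A) : ℂ))⁻¹ * ((Real.sqrt (Nat.card A) : ℂ))⁻¹ *
          (if z + s ∈ A then sign (pairing (z + s) (s₁' + s₂')) else 0) := by
    intro z
    rw [cosetState_apply, cosetState_apply]
    by_cases h : z + s ∈ A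
    · rw [if_pos h, if_pos h, if_pos h]
      have hs : sign (pairing (z + s) s₁') * sign (pairing (z + s) s₂')
          = sign (pairing (z + s) (s₁' + s₂')) := by
        rw [pairing_add_right, sign_add]
      have hcj : (starRingEnd ℂ) ((Real.sqrt (Nat.card A) : ℂ))⁻¹
          = ((Real.sqrt (Nat.card A) : ℂ))⁻¹ := by
        rw [map_inv₀, Complex.conj_ofReal]
      rw [map_mul, sign_conj, hcj, mul_mul_mul_comm, hs]
    · rw [if_neg h, if_neg h, if_neg h]
      simp
  rw [Finset.sum_congr rfl (fun z _ => key z), ← Finset.mul_sum]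
  have hre : (∑ z : V n, (if z + s ∈ A then sign (pairing (z + s) (s₁' + s₂')) else 0)) =
      ∑ w : V n, (if w ∈ A then sign (pairing w (s₁' + s₂')) else 0) :=
    Fintype.sum_equiv (Equiv.addRight s) _ _ (fun z => rfl)
  rw [hre]
  have hsub : (∑ w : V n, (if w ∈ A then sign (pairing w (s₁' + s₂')) else 0)) =
      ∑ a : A, sign (pairing (a : V n) (s₁' + s₂')) := by
    rw [← Finset.sum_filter]
    exact Finset.sum_subtype _ (by simp) _
  rw [hsub, sign_sum_eq]
  by_cases h : s₁' + s₂' ∈ perp A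
  · rw [if_pos h, if_pos h, hc]
  · rw [if_neg h, if_neg h, mul_zero]

end Aux2

section Aux3
variable {n : ℕ}

lemma perp_pairing_zero {A : Submodule (ZMod 2) (V n)} {a y : V n}
    (ha : a ∈ A) (hy : y ∈ perp A) : pairing a y = 0 := hy a ha

lemma cosetState_shift (A : Submodule (ZMod 2) (V n)) {s₁ s₁' s₂ s₂' : V n}
    (h1 : coset A s₁ = coset A s₂) (h2 : coset (perp A) s₁' = coset (perp A) s₂') :
    cosetState A s₂ s₂' = sign (pairing (s₁ + s₂) s₂') • cosetState A s₁ s₁' := by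
  have hA : s₁ + s₂ ∈ A := coset_eq_iff.mp h1
  have hperp : s₁' + s₂' ∈ perp A := coset_eq_iff.mp h2
  ext z
  show cosetState A s₂ s₂' z = sign (pairing (s₁ + s₂) s₂') * cosetState A s₁ s₁' z
  rw [cosetState_apply, cosetState_apply]
  have hiff : z + s₂ ∈ A ↔ z + s₁ ∈ A := by
    constructor
    · intro h
      have := A.add_mem h hA
      rwa [show z + s₂ + (s₁ + s₂) = z + s₁ by
        rw [show z + s₂ + (s₁ + s₂) = z + (s₂ + s₂) + s₁ by abel, V_add_self, add_zero]] at this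
    · intro h
      have := A.add_mem h hA
      rwa [show z + s₁ + (s₁ + s₂) = z + s₂ by
        rw [show z + s₁ + (s₁ + s₂) = z + (s₁ + s₁) + s₂ by abel, V_add_self, add_zero]] at this
  by_cases h : z + s₁ ∈ A
  · rw [if_pos (hiff.mpr h), if_pos h]
    have key : pairing (z + s₂) s₂' = pairing (s₁ + s₂) s₂' + pairing (z + s₁) s₁' := by
      have e1 : z + s₂ = (z + s₁) + (s₁ + s₂) := by
        rw [show z + s₁ + (s₁ + s₂) = z + (s₁ + s₁) + s₂ by abel, V_add_self, add_zero]
      rw [e1, pairing_add_left]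
      have e2 : pairing (z + s₁) s₂' = pairing (z + s₁) s₁' := by
        have e3 : s₂' = s₁' + (s₁' + s₂') := by
          rw [show s₁' + (s₁' + s₂') = (s₁' + s₁') + s₂' by abel, V_add_self, zero_add]
        rw [e3, pairing_add_right, perp_pairing_zero h hperp, add_zero]
      rw [e2]
      ring
    rw [key, sign_add]
    ring
  · rw [if_neg (fun hh => h (hiff.mp hh)), if_neg h]
    ring

lemma outer_shift (A : Submodule (ZMod 2) (V n)) {s₁ s₁' s₂ s₂' : V n}
    (h1 : coset A s₁ = coset A s₂) (h2 : coset (perp A) s₁' = coset (perp A) s₂') :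
    outer A s₂ s₂' = outer A s₁ s₁' := by
  have := cosetState_shift A h1 h2
  ext x y
  show cosetState A s₂ s₂' x * (starRingEnd ℂ) (cosetState A s₂ s₂' y)
    = cosetState A s₁ s₁' x * (starRingEnd ℂ) (cosetState A s₁ s₁' y)
  rw [this]
  show sign (pairing (s₁ + s₂) s₂') * cosetState A s₁ s₁' x *
      (starRingEnd ℂ) (sign (pairing (s₁ + s₂) s₂') * cosetState A s₁ s₁' y) = _
  rw [map_mul, sign_conj]
  have := sign2_mul_self (pairing (s₁ + s₂) s₂')
  calc sign (pairing (s₁ + s₂) s₂') * cosetState A s₁ s₁' x *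
      (sign (pairing (s₁ + s₂) s₂') * (starRingEnd ℂ) (cosetState A s₁ s₁' y))
      = (sign (pairing (s₁ + s₂) s₂') * sign (pairing (s₁ + s₂) s₂')) *
        (cosetState A s₁ s₁' x * (starRingEnd ℂ) (cosetState A s₁ s₁' y)) := by ring
    _ = _ := by rw [this, one_mul]

lemma cosetState_eq_zero {A : Submodule (ZMod 2) (V n)} {s z : V n} (s' : V n)
    (h : z + s ∉ A) : cosetState A s s' z = 0 := by
  rw [cosetState_apply, if_neg h, mul_zero]

lemma outer_mul (A : Submodule (ZMod 2) (V n)) (s₁ s₁' s₂ s₂' : V n) :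
    outer A s₁ s₁' * outer A s₂ s₂' =
      if coset A s₁ = coset A s₂ ∧ coset (perp A) s₁' = coset (perp A) s₂' then
        outer A s₁ s₁' else 0 := by
  by_cases h1 : coset A s₁ = coset A s₂
  · have h1' : outer A s₂ s₂' = outer A s₁ s₂' := outer_shift A h1 rfl
    rw [h1']
    have hmul : ∀ s₃' : V n, outer A s₁ s₁' * outer A s₁ s₃' =
        (if s₁' + s₃' ∈ perp A then (1 : ℂ) else 0) •
          Matrix.of (fun x y => cosetState A s₁ s₁' x *
            (starRingEnd ℂ) (cosetState A s₁ s₃' y)) := by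
      intro s₃'
      ext x y
      rw [Matrix.mul_apply]
      show (∑ z, (cosetState A s₁ s₁' x * (starRingEnd ℂ) (cosetState A s₁ s₁' z)) *
        (cosetState A s₁ s₃' z * (starRingEnd ℂ) (cosetState A s₁ s₃' y))) = _
      have : ∀ z, (cosetState A s₁ s₁' x * (starRingEnd ℂ) (cosetState A s₁ s₁' z)) *
          (cosetState A s₁ s₃' z * (starRingEnd ℂ) (cosetState A s₁ s₃' y)) =
            ((starRingEnd ℂ) (cosetState A s₁ s₁' z) * cosetState A s₁ s₃' z) *
            (cosetState A s₁ s₁' x * (starRingEnd ℂ) (cosetState A s₁ s₃' y)) := by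
        intro z; ring
      rw [Finset.sum_congr rfl (fun z _ => this z), ← Finset.sum_mul, inner_cosetState]
      show _ = (if s₁' + s₃' ∈ perp A then (1 : ℂ) else 0) *
        (cosetState A s₁ s₁' x * (starRingEnd ℂ) (cosetState A s₁ s₃' y))
      rfl
    by_cases h2 : coset (perp A) s₁' = coset (perp A) s₂'
    · rw [if_pos ⟨h1, h2⟩]
      have h2' : outer A s₁ s₂' = outer A s₁ s₁' := outer_shift A rfl h2
      have hself : outer A s₁ s₂' = outer A s₁ s₂' := rfl
      rw [hmul s₂']
      rw [if_pos (coset_eq_iff.mp h2), one_smul]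
      -- now need : of (fun x y => u₁ x * conj (u₂ y)) = outer A s₁ s₁'
      have hstate := cosetState_shift A (s₁ := s₁) (s₂ := s₁) rfl h2
      ext x y
      show cosetState A s₁ s₁' x * (starRingEnd ℂ) (cosetState A s₁ s₂' y)
        = cosetState A s₁ s₁' x * (starRingEnd ℂ) (cosetState A s₁ s₁' y)
      rw [hstate]
      show cosetState A s₁ s₁' x * (starRingEnd ℂ)
          (sign (pairing (s₁ + s₁) s₂') * cosetState A s₁ s₁' y) = _
      rw [V_add_self]
      have : pairing (0 : V n) s₂' = 0 := by
        simp [pairing]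
      rw [this]
      simp [sign]
    · rw [if_neg (fun hc => h2 hc.2), hmul s₂',
        if_neg (fun hc => h2 (coset_eq_iff.mpr hc)), zero_smul]
  · rw [if_neg (fun hc => h1 hc.1)]
    ext x y
    rw [Matrix.mul_apply]
    apply Finset.sum_eq_zero
    intro z _
    show (cosetState A s₁ s₁' x * (starRingEnd ℂ) (cosetState A s₁ s₁' z)) *
        (cosetState A s₂ s₂' z * (starRingEnd ℂ) (cosetState A s₂ s₂' y)) = 0
    by_cases hz : z + s₁ ∈ A
    · have hz2 : z + s₂ ∉ A := by
        intro hz2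
        apply h1
        apply coset_eq_iff.mpr
        have := A.add_mem hz hz2
        rwa [show z + s₁ + (z + s₂) = (z + z) + (s₁ + s₂) by abel, V_add_self, zero_add] at this
      rw [cosetState_eq_zero s₂' hz2]
      ring
    · rw [cosetState_eq_zero s₁' hz]
      simp

lemma outer_isHermitian (A : Submodule (ZMod 2) (V n)) (s s' : V n) :
    (outer A s s').IsHermitian := by
  ext x y
  show (starRingEnd ℂ) (cosetState A s s' y * (starRingEnd ℂ) (cosetState A s s' x)) = _
  rw [map_mul, Complex.conj_conj]
  show _ = cosetState A s s' x * (starRingEnd ℂ) (cosetState A s s' y)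
  ring

end Aux3

section Aux4
variable {n : ℕ}

/-- The pairing as a bilinear form. -/
noncomputable def pairingB (n : ℕ) : LinearMap.BilinForm (ZMod 2) (V n) :=
  LinearMap.mk₂ (ZMod 2) pairing pairing_add_left
    (fun c x y => by rw [pairing_comm, pairing_smul_right, pairing_comm, smul_eq_mul])
    pairing_add_right (fun c x y => by rw [pairing_smul_right, smul_eq_mul])

lemma pairingB_apply (x y : V n) : pairingB n x y = pairing x y := rfl

lemma perp_eq_orthogonal (A : Submodule (ZMod 2) (V n)) :
    perp A = (pairingB n).orthogonal A := by
  ext y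
  rw [LinearMap.BilinForm.mem_orthogonal_iff]
  constructor
  · intro hy a ha
    exact hy a ha
  · intro hy a ha
    exact hy a ha

lemma pairingB_nondegenerate : (pairingB n).Nondegenerate := by
  refine (LinearMap.IsRefl.nondegenerate_iff_separatingLeft (fun x y h => by show pairing y x = 0; rw [pairing_comm]; exact h)).mpr ?_
  intro x hx
  funext i
  have := hx (Pi.single i 1)
  rw [pairingB_apply, pairing] at this
  rw [Finset.sum_eq_single i] at this
  · simpa using this
  · intro j _ hj
    simp [Pi.single_apply, hj]
  · intro h; exact absurd (Finset.mem_univ i) h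

lemma pairingB_isRefl : (pairingB n).IsRefl := by
  intro x y h
  show pairing y x = 0
  rw [pairing_comm]
  exact h

lemma card_mul_card_perp (A : Submodule (ZMod 2) (V n)) :
    Fintype.card A * Fintype.card (perp A) = 2 ^ n := by
  have hfr : Module.finrank (ZMod 2) (perp A) = n - Module.finrank (ZMod 2) A := by
    rw [perp_eq_orthogonal]
    rw [LinearMap.BilinForm.finrank_orthogonal pairingB_nondegenerate A]
    congr 1
    exact Module.finrank_fin_fun (ZMod 2)
  have hle : Module.finrank (ZMod 2) A ≤ n := by
    have := Submodule.finrank_le A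
    rwa [Module.finrank_fin_fun (ZMod 2)] at this
  have c1 : Fintype.card A = 2 ^ Module.finrank (ZMod 2) A := by
    have := Module.card_eq_pow_finrank (K := ZMod 2) (V := A)
    rwa [ZMod.card 2] at this
  have c2 : Fintype.card (perp A) = 2 ^ Module.finrank (ZMod 2) (perp A) := by
    have := Module.card_eq_pow_finrank (K := ZMod 2) (V := perp A)
    rwa [ZMod.card 2] at this
  rw [c1, c2, hfr, ← pow_add]
  congr 1
  omega

lemma card_filter_cosetA (A : Submodule (ZMod 2) (V n)) (s₁ : V n) :
    (Finset.univ.filter fun s₂ : V n => coset A s₂ = coset A s₁).card = Fintype.card A := by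
  have hc : Fintype.card A = (Finset.univ.filter (fun x : V n => x ∈ A)).card := by
    exact Fintype.card_of_subtype _ (by simp)
  rw [hc]
  apply Finset.card_bij (fun s₂ _ => s₂ + s₁)
  · intro s₂ hs₂
    simp only [Finset.mem_filter, Finset.mem_univ, true_and] at hs₂ ⊢
    rw [coset_eq_iff] at hs₂
    rwa [show s₂ + s₁ = s₂ + s₁ from rfl]
  · intro a ha b hb hab
    have : a + s₁ + s₁ = b + s₁ + s₁ := by rw [hab]
    rwa [add_assoc, V_add_self, add_zero, add_assoc, V_add_self, add_zero] at this
  · intro b hb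
    simp only [Finset.mem_filter, Finset.mem_univ, true_and] at hb
    refine ⟨b + s₁, ?_, ?_⟩
    · simp only [Finset.mem_filter, Finset.mem_univ, true_and]
      rw [coset_eq_iff]
      rwa [add_assoc, V_add_self, add_zero]
    · rw [add_assoc, V_add_self, add_zero]
end Aux4

section Aux5
variable {n : ℕ}

lemma kron_conjTranspose {l m o p : Type*} [Fintype l] [Fintype m] [Fintype o] [Fintype p]
    (M : Matrix l m ℂ) (N : Matrix o p ℂ) : (M ⊗ₖ N).conjTranspose = M.conjTranspose ⊗ₖ N.conjTranspose := by
  ext ⟨i, j⟩ ⟨k, l'⟩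
  simp only [Matrix.conjTranspose_apply, Matrix.kroneckerMap_apply, star_mul']
end Aux5

/-- For coset-invariant families of orthogonal projections, `Π^A[P,Q]` is an
orthogonal projection: Hermitian and idempotent. -/
theorem PiMat_isOrthogonalProjection
    {n : ℕ} {I J : Type} [Fintype I] [Fintype J]
    (A : Submodule (ZMod 2) (V n))
    (P : V n × V n → Matrix I I ℂ) (Q : V n × V n → Matrix J J ℂ)
    (hPproj : IsProjFamily P) (hPinv : CosetInvariant A P)
    (hQproj : IsProjFamily Q) (hQinv : CosetInvariant A Q) :
    (PiMat A P Q).IsHermitian ∧ PiMat A P Q * PiMat A P Q = PiMat A P Q := by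
  classical
  set T : V n × V n → Matrix (V n × I × J) (V n × I × J) ℂ :=
    fun p => (outer A p.1 p.2) ⊗ₖ (P p ⊗ₖ Q p) with hT
  have hSum : PiMat A P Q = ((2 : ℂ) ^ n)⁻¹ • ∑ p : V n × V n, T p := by
    rw [PiMat, Fintype.sum_prod_type]
  have hTH : ∀ p, (T p).conjTranspose = T p := by
    intro p
    rw [hT]
    show ((outer A p.1 p.2) ⊗ₖ (P p ⊗ₖ Q p)).conjTranspose = _
    rw [kron_conjTranspose, kron_conjTranspose, outer_isHermitian A p.1 p.2,
      (hPproj p).1, (hQproj p).1]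
  constructor
  · show (PiMat A P Q).conjTranspose = PiMat A P Q
    rw [hSum, Matrix.conjTranspose_smul, Matrix.conjTranspose_sum]
    rw [Finset.sum_congr rfl (fun p _ => hTH p)]
    simp
  · have hterm : ∀ p q : V n × V n, T p * T q =
        if coset A p.1 = coset A q.1 ∧ coset (perp A) p.2 = coset (perp A) q.2
          then T p else 0 := by
      intro p q
      rw [hT]
      show ((outer A p.1 p.2) ⊗ₖ (P p ⊗ₖ Q p)) * ((outer A q.1 q.2) ⊗ₖ (P q ⊗ₖ Q q)) = _
      rw [← Matrix.mul_kronecker_mul, ← Matrix.mul_kronecker_mul, outer_mul]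
      by_cases h : coset A p.1 = coset A q.1 ∧ coset (perp A) p.2 = coset (perp A) q.2
      · rw [if_pos h, if_pos h]
        have hP : P q = P p := hPinv q.1 q.2 p.1 p.2 h.1.symm h.2.symm
        have hQ : Q q = Q p := hQinv q.1 q.2 p.1 p.2 h.1.symm h.2.symm
        rw [hP, hQ, (hPproj p).2, (hQproj p).2]
      · rw [if_neg h, if_neg h, Matrix.zero_kronecker]
    have hinner : ∀ p : V n × V n,
        (∑ q : V n × V n, T p * T q) = (2 ^ n : ℕ) • T p := by
      intro p
      rw [Finset.sum_congr rfl (fun q _ => hterm p q)]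
      rw [← Finset.sum_filter, Finset.sum_const]
      congr 1
      have hfil : (Finset.univ.filter fun q : V n × V n =>
          coset A p.1 = coset A q.1 ∧ coset (perp A) p.2 = coset (perp A) q.2)
          = (Finset.univ.filter fun a : V n => coset A a = coset A p.1) ×ˢ
            (Finset.univ.filter fun b : V n => coset (perp A) b = coset (perp A) p.2) := by
        ext q
        simp only [Finset.mem_filter, Finset.mem_product, Finset.mem_univ, true_and]
        constructor
        · rintro ⟨h1, h2⟩; exact ⟨h1.symm, h2.symm⟩
        · rintro ⟨h1, h2⟩; exact ⟨h1.symm, h2.symm⟩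
      rw [hfil, Finset.card_product, card_filter_cosetA A p.1,
        card_filter_cosetA (perp A) p.2, card_mul_card_perp]
    rw [hSum, Matrix.smul_mul, Matrix.mul_smul, smul_smul, Finset.sum_mul_sum]
    rw [Finset.sum_congr rfl (fun p _ => hinner p)]
    rw [← Finset.smul_sum]
    rw [← Nat.cast_smul_eq_nsmul ℂ, smul_smul]
    congr 1
    have h2n : ((2 : ℂ) ^ n) ≠ 0 := by positivity
    push_cast
    field_simp
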